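/- Let G be a finite nilpotent group and H ≤ G any subgroup, and let ℓ be any prime. Then the pair G/H is strongly ℓ-divisible, and δ_ℓ(G/H) is at most the nilpotency class of G. -/

import Mathlib

open Pointwise


def LDiv (ℓ : ℕ) {G : Type*} [Group G] (H : Subgroup G) (δ : ℕ) : Prop :=
  ∃ Gs : Fin δ → Subgroup G,
    (∀ i, H ≤ Gs i) ∧
    ∀ σ : G, σ ∉ H → orderOf σ = ℓ →
      ∃ i : Fin δ, ∃ τ : G, IsConj σ τ ∧ τ ∈ Gs i ∧
        ∀ π ∈ Gs i, π * τ * π⁻¹ ∉ H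

/-- The pair `G/H` is strongly `ℓ`-divisible, witnessed by `δ` subgroups. -/
def SLDiv (ℓ : ℕ) {G : Type*} [Group G] (H : Subgroup G) (δ : ℕ) : Prop :=
  ∃ Gs : Fin δ → Subgroup G,
    (∀ i, H ≤ Gs i) ∧
    ∀ σ : G, σ ∉ H → σ ^ ℓ ∈ H → (∃ m : ℕ, orderOf σ = ℓ ^ m) →
      ∃ i : Fin δ, σ ∈ Gs i ∧ ∀ π ∈ Gs i, π * σ * π⁻¹ ∉ H

lemma key_lemma {G : Type*} [Group G] [Group.IsNilpotent G] (H : Subgroup G) :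
    ∀ σ : G, σ ∉ H →
      ∃ i : Fin (Group.nilpotencyClass G),
        σ ∈ H ⊔ Subgroup.upperCentralSeries G (i + 1) ∧
        ∀ π ∈ H ⊔ Subgroup.upperCentralSeries G (i + 1), π * σ * π⁻¹ ∉ H := by
  classical
  intro σ hσ
  set c := Group.nilpotencyClass G with hc
  have hpc : σ ∈ H ⊔ Subgroup.upperCentralSeries G c := by
    rw [upperCentralSeries_nilpotencyClass]
    exact Subgroup.mem_sup_right (Subgroup.mem_top σ)
  have hexists : ∃ n, σ ∈ H ⊔ Subgroup.upperCentralSeries G n := ⟨c, hpc⟩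
  set n := Nat.find hexists with hn
  have hspec : σ ∈ H ⊔ Subgroup.upperCentralSeries G n := Nat.find_spec hexists
  have hn0 : n ≠ 0 := by
    intro h0
    rw [h0] at hspec
    simp only [upperCentralSeries_zero, sup_bot_eq] at hspec
    exact hσ hspec
  obtain ⟨k, hk⟩ := Nat.exists_eq_succ_of_ne_zero hn0
  have hnc : n ≤ c := Nat.find_le hpc
  have hkc : k < c := by omega
  refine ⟨⟨k, hkc⟩, ?_, ?_⟩
  · have hsp := hspec
    rw [hk] at hsp
    simpa using hsp
  · intro π hπ hcon
    have hπ' : π ∈ (H : Set G) * (Subgroup.upperCentralSeries G (k + 1) : Set G) := by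
      rw [← Subgroup.mul_normal]
      simpa [← hk] using hπ
    obtain ⟨h, hh, z, hz, rfl⟩ := hπ'
    -- conjugate of σ by z is in H
    have hzσ : z * σ * z⁻¹ ∈ H := by
      have : h⁻¹ * (h * z * σ * (h * z)⁻¹) * h ∈ H :=
        H.mul_mem (H.mul_mem (H.inv_mem hh) hcon) hh
      simpa [mul_assoc, mul_inv_rev] using this
    -- commutator in Z k
    have hcomm : z * σ * z⁻¹ * σ⁻¹ ∈ Subgroup.upperCentralSeries G k :=
      (mem_upperCentralSeries_succ_iff).mp hz σ
    -- then σ ∈ H ⊔ Z k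
    have hσk : σ ∈ H ⊔ Subgroup.upperCentralSeries G k := by
      have h1 : (z * σ * z⁻¹ * σ⁻¹)⁻¹ ∈ H ⊔ Subgroup.upperCentralSeries G k :=
        (H ⊔ Subgroup.upperCentralSeries G k).inv_mem (Subgroup.mem_sup_right hcomm)
      have h2 : z * σ * z⁻¹ ∈ H ⊔ Subgroup.upperCentralSeries G k := Subgroup.mem_sup_left hzσ
      have := (H ⊔ Subgroup.upperCentralSeries G k).mul_mem h1 h2
      simpa [mul_assoc] using this
    exact Nat.find_min hexists (by omega : k < n) hσk

/-- For a finite nilpotent group `G`, any `H ≤ G`, and any prime `ℓ`, the pair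
`G/H` is strongly `ℓ`-divisible with at most `nilpotencyClass G` witnessing
subgroups, and `δ_ℓ(G/H)` is at most the nilpotency class of `G`. -/
theorem stmt5 {G : Type*} [Group G] [Finite G] [Group.IsNilpotent G]
    (ℓ : ℕ) (hℓ : ℓ.Prime) (H : Subgroup G) :
    SLDiv ℓ H (Group.nilpotencyClass G) ∧
      sInf {δ | LDiv ℓ H δ} ≤ Group.nilpotencyClass G := by
  constructor
  · refine ⟨fun i => H ⊔ Subgroup.upperCentralSeries G (i + 1), fun i => le_sup_left, ?_⟩
    intro σ hσ _ _
    exact key_lemma H σ hσ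
  · apply Nat.sInf_le
    refine ⟨fun i => H ⊔ Subgroup.upperCentralSeries G (i + 1), fun i => le_sup_left, ?_⟩
    intro σ hσ _
    obtain ⟨i, h1, h2⟩ := key_lemma H σ hσ
    exact ⟨i, σ, IsConj.refl σ, h1, h2⟩
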